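/- Level structures factor across an admissible cut: for a rooted tree τ with an admissible cut C separating τ into a root piece τ_R and a forest φ of remaining pieces, the level structures on τ for which C is realized as a horizontal cut are in bijection with pairs of (a level structure on τ_R, a level structure on φ). -/

import Mathlib

/-- Level structures factor across an admissible cut.  Model: `V` is the
vertex poset of the rooted tree `τ` (roots minimal); an admissible cut separates `V`
into the root piece `{v | r v}` — which is downward closed — and the forest
`{v | ¬ r v}` of remaining pieces.  A level structure is a monotone bijection onto
`Fin (card)`; the cut `C` is realized as a horizontal cut of a level structure `f`
iff every root-piece vertex has a smaller label than every remaining vertex.  Claim: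
level structures on `τ` realizing `C` are in bijection with pairs of (a level
structure on the root piece, a level structure on the forest). -/
theorem level_structures_factor_across_cut (V : Type) [Fintype V] [DecidableEq V]
    [PartialOrder V] (r : V → Prop) [DecidablePred r]
    (hdown : ∀ a b : V, a ≤ b → r b → r a) :
    Nonempty
      ({f : V ≃ Fin (Fintype.card V) //
          (∀ a b : V, a ≤ b → (f a : ℕ) ≤ f b) ∧
          (∀ a b : V, r a → ¬ r b → (f a : ℕ) < f b)}
        ≃ ({g : {v : V // r v} ≃ Fin (Fintype.card {v : V // r v}) //
              ∀ a b : {v : V // r v}, (a : V) ≤ (b : V) → (g a : ℕ) ≤ g b}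
           × {h : {v : V // ¬ r v} ≃ Fin (Fintype.card {v : V // ¬ r v}) //
              ∀ a b : {v : V // ¬ r v}, (a : V) ≤ (b : V) → (h a : ℕ) ≤ h b})) := by
  classical
  set k := Fintype.card {v : V // r v} with hk
  set m := Fintype.card {v : V // ¬ r v} with hm
  have hcard : k + m = Fintype.card V := by
    rw [hk, hm, ← Fintype.card_sum]
    exact Fintype.card_congr (Equiv.sumCompl r)
  let mk : ({v : V // r v} ≃ Fin k) → ({v : V // ¬ r v} ≃ Fin m) →
      (V ≃ Fin (Fintype.card V)) := fun g h =>
    (Equiv.sumCompl r).symm.trans ((g.sumCongr h).trans (finSumFinEquiv.trans (finCongr hcard)))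
  have mkval_pos : ∀ g h (a : V) (ha : r a), ((mk g h) a : ℕ) = (g ⟨a, ha⟩ : ℕ) := by
    intro g h a ha
    simp [mk, Equiv.sumCompl_symm_apply_of_pos ha]
  have mkval_neg : ∀ g h (a : V) (ha : ¬ r a), ((mk g h) a : ℕ) = k + (h ⟨a, ha⟩ : ℕ) := by
    intro g h a ha
    simp [mk, Equiv.sumCompl_symm_apply_of_neg ha]
  let Φ : ({g : {v : V // r v} ≃ Fin k //
              ∀ a b : {v : V // r v}, (a : V) ≤ (b : V) → (g a : ℕ) ≤ g b}
           × {h : {v : V // ¬ r v} ≃ Fin m //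
              ∀ a b : {v : V // ¬ r v}, (a : V) ≤ (b : V) → (h a : ℕ) ≤ h b}) →
      {f : V ≃ Fin (Fintype.card V) //
          (∀ a b : V, a ≤ b → (f a : ℕ) ≤ f b) ∧
          (∀ a b : V, r a → ¬ r b → (f a : ℕ) < f b)} := fun p =>
    ⟨mk p.1.1 p.2.1, by
      constructor
      · intro a b hab
        by_cases ha : r a <;> by_cases hb : r b
        · rw [mkval_pos _ _ a ha, mkval_pos _ _ b hb]
          exact p.1.2 ⟨a, ha⟩ ⟨b, hb⟩ hab
        · rw [mkval_pos _ _ a ha, mkval_neg _ _ b hb]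
          have := (p.1.1 ⟨a, ha⟩).isLt
          omega
        · exact absurd (hdown a b hab hb) ha
        · rw [mkval_neg _ _ a ha, mkval_neg _ _ b hb]
          exact Nat.add_le_add_left (p.2.2 ⟨a, ha⟩ ⟨b, hb⟩ hab) k
      · intro a b ha hb
        rw [mkval_pos _ _ a ha, mkval_neg _ _ b hb]
        have := (p.1.1 ⟨a, ha⟩).isLt
        omega⟩
  have hinj : Function.Injective Φ := by
    intro p q hpq
    have heq : mk p.1.1 p.2.1 = mk q.1.1 q.2.1 := congrArg Subtype.val hpq
    have hfun : ∀ v : V, ((mk p.1.1 p.2.1) v : ℕ) = ((mk q.1.1 q.2.1) v : ℕ) := by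
      intro v; rw [heq]
    refine Prod.ext (Subtype.ext (Equiv.ext fun a => Fin.ext ?_))
      (Subtype.ext (Equiv.ext fun a => Fin.ext ?_))
    · rw [← mkval_pos p.1.1 p.2.1 a a.2, ← mkval_pos q.1.1 q.2.1 a a.2]
      exact hfun a
    · have h1 := mkval_neg p.1.1 p.2.1 a a.2
      have h2 := mkval_neg q.1.1 q.2.1 a a.2
      rw [Subtype.coe_eta] at h1 h2
      have := hfun a
      omega
  have hsurj : Function.Surjective Φ := by
    rintro ⟨f, hmono, hcut⟩
    have hval : ∀ v : V, (f v : ℕ) < Fintype.card V := fun v => (f v).isLt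
    have hvinj : Function.Injective (fun v : V => (f v : ℕ)) :=
      fun a b hab => f.injective (Fin.ext hab)
    have hlt : ∀ a : V, r a → (f a : ℕ) < k := by
      intro a ha
      have hsub : ((Finset.univ.filter fun v : V => ¬ r v).image fun v => (f v : ℕ)) ⊆
          Finset.Ico ((f a : ℕ) + 1) (Fintype.card V) := by
        intro x hx
        simp only [Finset.mem_image, Finset.mem_filter] at hx
        obtain ⟨v, ⟨_, hv⟩, rfl⟩ := hx
        exact Finset.mem_Ico.2 ⟨hcut a v ha hv, hval v⟩
      have hcardim : ((Finset.univ.filter fun v : V => ¬ r v).image fun v => (f v : ℕ)).card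
          = m := by
        rw [Finset.card_image_of_injective _ hvinj, hm, Fintype.card_subtype]
      have := Finset.card_le_card hsub
      rw [hcardim, Nat.card_Ico] at this
      have := hval a
      omega
    have hge : ∀ b : V, ¬ r b → k ≤ (f b : ℕ) := by
      intro b hb
      have hsub : ((Finset.univ.filter fun v : V => r v).image fun v => (f v : ℕ)) ⊆
          Finset.range (f b : ℕ) := by
        intro x hx
        simp only [Finset.mem_image, Finset.mem_filter] at hx
        obtain ⟨v, ⟨_, hv⟩, rfl⟩ := hx
        exact Finset.mem_range.2 (hcut v b hv hb)
      have hcardim : ((Finset.univ.filter fun v : V => r v).image fun v => (f v : ℕ)).card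
          = k := by
        rw [Finset.card_image_of_injective _ hvinj, hk, Fintype.card_subtype]
      have := Finset.card_le_card hsub
      rw [hcardim, Finset.card_range] at this
      exact this
    let g0 : {v : V // r v} → Fin k := fun a => ⟨(f a : ℕ), hlt a a.2⟩
    have hg0inj : Function.Injective g0 := by
      intro a b hab
      have h := congrArg Fin.val hab
      exact Subtype.ext (f.injective (Fin.ext h))
    have hg0bij : Function.Bijective g0 :=
      (Fintype.bijective_iff_injective_and_card g0).2 ⟨hg0inj, by simp [hk]⟩
    let h0 : {v : V // ¬ r v} → Fin m := fun b =>
      ⟨(f b : ℕ) - k, by have h1 := hge b b.2; have h2 := hval b; omega⟩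
    have hh0inj : Function.Injective h0 := by
      intro a b hab
      have h1 := hge a a.2
      have h2 := hge b b.2
      have h3 : (f (a : V) : ℕ) - k = (f (b : V) : ℕ) - k := congrArg Fin.val hab
      exact Subtype.ext (f.injective (Fin.ext (by omega)))
    have hh0bij : Function.Bijective h0 :=
      (Fintype.bijective_iff_injective_and_card h0).2 ⟨hh0inj, by simp [hm]⟩
    refine ⟨⟨⟨Equiv.ofBijective g0 hg0bij, ?_⟩, ⟨Equiv.ofBijective h0 hh0bij, ?_⟩⟩, ?_⟩
    · intro a b hab
      exact hmono a b hab
    · intro a b hab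
      exact Nat.sub_le_sub_right (hmono a b hab) k
    · refine Subtype.ext (Equiv.ext fun v => Fin.ext ?_)
      by_cases hv : r v
      · rw [mkval_pos _ _ v hv]
        rfl
      · rw [mkval_neg _ _ v hv]
        have := hge v hv
        show k + ((f v : ℕ) - k) = (f v : ℕ)
        omega
  exact ⟨(Equiv.ofBijective Φ ⟨hinj, hsurj⟩).symm⟩
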